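/- arXiv:1612.09108 — 9 statements merged into one kernel-verified Lean document; each statement's English description precedes it below -/
import Mathlib

section
/- Let μ be a K-valued measure on 𝓡. If (Aₙ)ₙ∈ℕ is a sequence of pairwise disjoint sets in 𝓡 whose union A = ⋃ₙ Aₙ also belongs to 𝓡, then the series Σₙ μ(Aₙ) converges to μ(A), i.e. the partial sums Σ_{k<n} μ(Aₖ) tend to μ(A) in K as n → ∞ (σ-additivity follows from the continuity axiom). -/
/-- A covering and separating ring of subsets of `X`. -/
structure IsSepSetRing {X : Type*} (R : Set (Set X)) : Prop where
  empty_mem : (∅ : Set X) ∈ R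
  union_mem : ∀ ⦃A B : Set X⦄, A ∈ R → B ∈ R → A ∪ B ∈ R
  diff_mem : ∀ ⦃A B : Set X⦄, A ∈ R → B ∈ R → A \ B ∈ R
  covering : ∀ x : X, ∃ A ∈ R, x ∈ A
  separating : ∀ a b : X, a ≠ b → ∃ A ∈ R, a ∈ A ∧ b ∉ A

/-- A `K`-valued measure on a ring of sets `R`. -/
structure IsNAMeasure {X : Type*} {K : Type*} [NontriviallyNormedField K]
    (R : Set (Set X)) (μ : Set X → K) : Prop where
  additive : ∀ ⦃A B : Set X⦄, A ∈ R → B ∈ R → Disjoint A B → μ (A ∪ B) = μ A + μ B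
  bounded : ∀ A ∈ R, BddAbove {r : ℝ | ∃ B ∈ R, B ⊆ A ∧ r = ‖μ B‖}
  continuity : ∀ R₀ ⊆ R, R₀.Nonempty → (∀ A ∈ R₀, ∀ B ∈ R₀, A ∩ B ∈ R₀) →
    ⋂₀ R₀ = ∅ → ∀ ε : ℝ, 0 < ε → ∃ A ∈ R₀, ‖μ A‖ < ε

/-- `‖A‖_μ`, the supremum of `‖μ B‖` over measurable `B ⊆ A`. -/
noncomputable def mSetNorm {X : Type*} {K : Type*} [NontriviallyNormedField K]
    (R : Set (Set X)) (μ : Set X → K) (A : Set X) : ℝ :=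
  sSup {r : ℝ | ∃ B ∈ R, B ⊆ A ∧ r = ‖μ B‖}

/-- The norm function `N_μ(x)`, the infimum of `‖A‖_μ` over measurable `A ∋ x`. -/
noncomputable def mNormFn {X : Type*} {K : Type*} [NontriviallyNormedField K]
    (R : Set (Set X)) (μ : Set X → K) (x : X) : ℝ :=
  sInf {r : ℝ | ∃ A ∈ R, x ∈ A ∧ r = mSetNorm R μ A}

/-- The extended (completed) ring `R_μ` of `μ`-approximable sets. -/
def extRing {X : Type*} {K : Type*} [NontriviallyNormedField K]
    (R : Set (Set X)) (μ : Set X → K) : Set (Set X) :=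
  {A : Set X | ∀ ε : ℝ, 0 < ε → ∃ B ∈ R, ∀ x ∈ (A ∪ B) \ (A ∩ B), mNormFn R μ x ≤ ε}

theorem stmt0 {X K : Type*} [NontriviallyNormedField K] [CompleteSpace K]
    (hna : ∀ x y : K, ‖x + y‖ ≤ max ‖x‖ ‖y‖)
    (R : Set (Set X)) (hR : IsSepSetRing R)
    (μ : Set X → K) (hμ : IsNAMeasure R μ)
    (A : ℕ → Set X) (hA : ∀ n, A n ∈ R)
    (hdisj : Pairwise (Function.onFun Disjoint A))
    (hU : (⋃ n, A n) ∈ R) :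
    Filter.Tendsto (fun n => ∑ k ∈ Finset.range n, μ (A k)) Filter.atTop
      (nhds (μ (⋃ n, A n))) := by
  classical
  set U := ⋃ n, A n with hUdef
  have hμ0 : μ ∅ = 0 := by
    have h := hμ.additive hR.empty_mem hR.empty_mem (by simp)
    simp only [Set.union_empty] at h
    exact left_eq_add.mp h
  have hSmem : ∀ n, (⋃ k ∈ Finset.range n, A k) ∈ R := by
    intro n
    induction n with
    | zero => simpa using hR.empty_mem
    | succ n ih =>
      have h : (⋃ k ∈ Finset.range (n+1), A k) = (⋃ k ∈ Finset.range n, A k) ∪ A n := by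
        rw [Finset.range_add_one]
        simp [Set.union_comm]
      rw [h]
      exact hR.union_mem ih (hA n)
  have hSdisj : ∀ n, Disjoint (⋃ k ∈ Finset.range n, A k) (A n) := by
    intro n
    rw [Set.disjoint_left]
    rintro x hx hxn
    simp only [Set.mem_iUnion] at hx
    obtain ⟨k, hk, hxk⟩ := hx
    exact (hdisj (Nat.ne_of_lt (Finset.mem_range.mp hk))).le_bot ⟨hxk, hxn⟩
  have hSsum : ∀ n, μ (⋃ k ∈ Finset.range n, A k) = ∑ k ∈ Finset.range n, μ (A k) := by
    intro n
    induction n with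
    | zero => simpa using hμ0
    | succ n ih =>
      have h : (⋃ k ∈ Finset.range (n+1), A k) = (⋃ k ∈ Finset.range n, A k) ∪ A n := by
        rw [Finset.range_add_one]
        simp [Set.union_comm]
      rw [h, hμ.additive (hSmem n) (hA n) (hSdisj n), ih, Finset.sum_range_succ]
  have hSsub : ∀ n, (⋃ k ∈ Finset.range n, A k) ⊆ U := by
    intro n x hx
    simp only [Set.mem_iUnion] at hx
    obtain ⟨k, _, h⟩ := hx
    exact Set.mem_iUnion.mpr ⟨k, h⟩
  set B : ℕ → Set X := fun n => U \ ⋃ k ∈ Finset.range n, A k with hBdef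
  have hBmem : ∀ n, B n ∈ R := fun n => hR.diff_mem hU (hSmem n)
  have hkey : ∀ n, μ U = ∑ k ∈ Finset.range n, μ (A k) + μ (B n) := by
    intro n
    have h1 : U = (⋃ k ∈ Finset.range n, A k) ∪ B n := (Set.union_diff_cancel (hSsub n)).symm
    calc μ U = μ ((⋃ k ∈ Finset.range n, A k) ∪ B n) := by rw [← h1]
      _ = μ (⋃ k ∈ Finset.range n, A k) + μ (B n) :=
          hμ.additive (hSmem n) (hBmem n) Set.disjoint_sdiff_right
      _ = _ := by rw [hSsum n]
  have hBanti : ∀ ⦃n m : ℕ⦄, n ≤ m → B m ⊆ B n := by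
    intro n m hnm x hx
    refine ⟨hx.1, fun h => hx.2 ?_⟩
    simp only [Set.mem_iUnion] at h ⊢
    obtain ⟨k, hk, hxk⟩ := h
    exact ⟨k, Finset.mem_range.mpr (lt_of_lt_of_le (Finset.mem_range.mp hk) hnm), hxk⟩
  have hBinter : ∀ x : X, ¬ (∀ n, x ∈ B n) := by
    intro x hx
    have hxU : x ∈ U := (hx 0).1
    rw [hUdef, Set.mem_iUnion] at hxU
    obtain ⟨m, hm⟩ := hxU
    exact (hx (m+1)).2 (Set.mem_iUnion.mpr ⟨m,
      Set.mem_iUnion.mpr ⟨Finset.mem_range.mpr (Nat.lt_succ_self m), hm⟩⟩)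
  have hdist : ∀ n, dist (∑ k ∈ Finset.range n, μ (A k)) (μ U) = ‖μ (B n)‖ := by
    intro n
    rw [dist_eq_norm, hkey n]
    have h : (∑ k ∈ Finset.range n, μ (A k)) -
        (∑ k ∈ Finset.range n, μ (A k) + μ (B n)) = -(μ (B n)) := by ring
    rw [h, norm_neg]
  rw [Metric.tendsto_atTop]
  intro ε hε
  by_contra hcon
  push_neg at hcon
  -- hcon : ∀ N, ∃ n ≥ N, ε ≤ dist (partial sum) (μ U)
  set R₀ : Set (Set X) := {C | ∃ n, ε ≤ ‖μ (B n)‖ ∧ C = B n} with hR₀def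
  have hsub : R₀ ⊆ R := by rintro C ⟨n, _, rfl⟩; exact hBmem n
  have hne : R₀.Nonempty := by
    obtain ⟨n, _, hn⟩ := hcon 0
    exact ⟨B n, n, by rwa [← hdist n], rfl⟩
  have hclosed : ∀ C ∈ R₀, ∀ D ∈ R₀, C ∩ D ∈ R₀ := by
    rintro C ⟨n, hn, rfl⟩ D ⟨m, hm, rfl⟩
    rcases le_total n m with h | h
    · have : B n ∩ B m = B m := Set.inter_eq_right.mpr (hBanti h)
      rw [this]; exact ⟨m, hm, rfl⟩
    · have : B n ∩ B m = B n := Set.inter_eq_left.mpr (hBanti h)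
      rw [this]; exact ⟨n, hn, rfl⟩
  have hempty : ⋂₀ R₀ = ∅ := by
    rw [Set.eq_empty_iff_forall_notMem]
    intro x hx
    refine hBinter x fun n => ?_
    obtain ⟨m, hmn, hm⟩ := hcon n
    rw [hdist m] at hm
    exact hBanti hmn (hx (B m) ⟨m, hm, rfl⟩)
  obtain ⟨C, ⟨n, hn, rfl⟩, hlt⟩ := hμ.continuity R₀ hsub hne hclosed hempty ε hε
  exact absurd hn (not_le.mpr hlt)
end

section
/- Let μ be a K-valued measure on 𝓡. For every A ∈ 𝓡 one has ‖A‖_μ = sup_{x ∈ A} N_μ(x) (with the convention that the supremum over the empty set is 0). -/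
section aux
variable {X K : Type*} [NontriviallyNormedField K]

lemma inter_mem' {R : Set (Set X)} (hR : IsSepSetRing R) {A B : Set X}
    (hA : A ∈ R) (hB : B ∈ R) : A ∩ B ∈ R := by
  have h : A ∩ B = A \ (A \ B) := by ext x; by_cases hx : x ∈ B <;> simp [hx]
  rw [h]; exact hR.diff_mem hA (hR.diff_mem hA hB)

lemma mu_empty {R : Set (Set X)} {μ : Set X → K} (hR : IsSepSetRing R)
    (hμ : IsNAMeasure R μ) : μ ∅ = 0 := by
  have h := hμ.additive hR.empty_mem hR.empty_mem disjoint_bot_left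
  simp only [Set.union_empty] at h
  have : μ (∅ : Set X) + 0 = μ ∅ + μ ∅ := by simpa using h
  exact (add_left_cancel this).symm

lemma norm_le_setNorm {R : Set (Set X)} {μ : Set X → K} (hμ : IsNAMeasure R μ)
    {A B : Set X} (hA : A ∈ R) (hB : B ∈ R) (hBA : B ⊆ A) :
    ‖μ B‖ ≤ mSetNorm R μ A :=
  le_csSup (hμ.bounded A hA) ⟨B, hB, hBA, rfl⟩

lemma setNorm_nonneg {R : Set (Set X)} {μ : Set X → K} (hR : IsSepSetRing R)
    (hμ : IsNAMeasure R μ) {A : Set X} (hA : A ∈ R) : 0 ≤ mSetNorm R μ A := by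
  have := norm_le_setNorm hμ hA hR.empty_mem (Set.empty_subset A)
  rwa [mu_empty hR hμ, norm_zero] at this

lemma normFn_le {R : Set (Set X)} {μ : Set X → K} (hR : IsSepSetRing R)
    (hμ : IsNAMeasure R μ) {A : Set X} {x : X} (hA : A ∈ R) (hx : x ∈ A) :
    mNormFn R μ x ≤ mSetNorm R μ A := by
  apply csInf_le
  · refine ⟨0, ?_⟩; rintro r ⟨C, hC, hxC, rfl⟩; exact setNorm_nonneg hR hμ hC
  · exact ⟨A, hA, hx, rfl⟩

lemma normFn_nonneg {R : Set (Set X)} {μ : Set X → K} (hR : IsSepSetRing R)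
    (hμ : IsNAMeasure R μ) (x : X) : 0 ≤ mNormFn R μ x := by
  obtain ⟨A, hA, hx⟩ := hR.covering x
  refine le_csInf ⟨_, ⟨A, hA, hx, rfl⟩⟩ ?_
  rintro r ⟨C, hC, hxC, rfl⟩
  exact setNorm_nonneg hR hμ hC

lemma key_bound {R : Set (Set X)} {μ : Set X → K}
    (hna : ∀ x y : K, ‖x + y‖ ≤ max ‖x‖ ‖y‖)
    (hR : IsSepSetRing R) (hμ : IsNAMeasure R μ)
    {B : Set X} (hB : B ∈ R) {T : ℝ} (hT0 : 0 ≤ T)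
    (hTx : ∀ x ∈ B, mNormFn R μ x ≤ T) : ‖μ B‖ ≤ T := by
  classical
  refine le_of_forall_pos_le_add fun ε hε => ?_
  -- choose for each x ∈ B a set g x ∈ R containing x with small mSetNorm
  have hg : ∀ x : X, ∃ C, C ∈ R ∧ (x ∈ B → x ∈ C ∧ mSetNorm R μ C < T + ε) := by
    intro x
    by_cases hx : x ∈ B
    · have hlt : mNormFn R μ x < T + ε := lt_of_le_of_lt (hTx x hx) (by linarith)
      obtain ⟨A0, hA0, hx0⟩ := hR.covering x
      obtain ⟨r, ⟨C, hC, hxC, rfl⟩, hr⟩ :=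
        exists_lt_of_csInf_lt (s := {r : ℝ | ∃ A ∈ R, x ∈ A ∧ r = mSetNorm R μ A})
          ⟨_, ⟨A0, hA0, hx0, rfl⟩⟩ hlt
      exact ⟨C, hC, fun _ => ⟨hxC, hr⟩⟩
    · exact ⟨∅, hR.empty_mem, fun h => absurd h hx⟩
  choose g hgR hgB using hg
  set U : Finset X → Set X := fun t => ⋃ x ∈ t, g x with hU
  have hUmem : ∀ t : Finset X, U t ∈ R := by
    intro t
    induction t using Finset.induction_on with
    | empty => simpa [hU] using hR.empty_mem
    | @insert a s ha ih =>
        have : U (insert a s) = g a ∪ U s := by simp [hU]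
        rw [this]; exact hR.union_mem (hgR a) ih
  have hUb : ∀ t : Finset X, ↑t ⊆ B → B ∩ U t ∈ R ∧ ‖μ (B ∩ U t)‖ ≤ T + ε := by
    intro t
    induction t using Finset.induction_on with
    | empty =>
        intro _
        have : B ∩ U ∅ = ∅ := by simp [hU]
        rw [this, mu_empty hR hμ, norm_zero]
        exact ⟨hR.empty_mem, by linarith⟩
    | @insert a s ha ih =>
        intro hsub
        have haB : a ∈ B := hsub (by simp)
        have hsB : ↑s ⊆ B := fun x hx => hsub (by simp [hx])
        obtain ⟨ihmem, ihnorm⟩ := ih hsB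
        have hid : B ∩ U (insert a s) = (B ∩ U s) ∪ ((B ∩ g a) \ U s) := by
          have : U (insert a s) = g a ∪ U s := by simp [hU]
          rw [this]; ext x; simp; tauto
        have hmem2 : (B ∩ g a) \ U s ∈ R :=
          hR.diff_mem (inter_mem' hR hB (hgR a)) (hUmem s)
        have hdisj : Disjoint (B ∩ U s) ((B ∩ g a) \ U s) := by
          rw [Set.disjoint_left]; rintro x ⟨-, hx⟩ ⟨-, hx'⟩; exact hx' hx
        have hmemU : B ∩ U (insert a s) ∈ R := by
          rw [hid]; exact hR.union_mem ihmem hmem2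
        refine ⟨hmemU, ?_⟩
        have hadd : μ (B ∩ U (insert a s)) = μ (B ∩ U s) + μ ((B ∩ g a) \ U s) := by
          rw [hid]; exact hμ.additive ihmem hmem2 hdisj
        have h2 : ‖μ ((B ∩ g a) \ U s)‖ ≤ T + ε := by
          have hsub2 : (B ∩ g a) \ U s ⊆ g a := fun x hx => hx.1.2
          exact le_trans (norm_le_setNorm hμ (hgR a) hmem2 hsub2)
            (le_of_lt (hgB a haB).2)
        rw [hadd]
        exact le_trans (hna _ _) (max_le ihnorm h2)
  -- the downward-directed family
  set R₀ : Set (Set X) := {C | ∃ t : Finset X, ↑t ⊆ B ∧ C = B \ U t} with hR₀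
  have hR₀sub : R₀ ⊆ R := by
    rintro C ⟨t, ht, rfl⟩; exact hR.diff_mem hB (hUmem t)
  have hR₀ne : R₀.Nonempty := ⟨B, ∅, by simp [hU]⟩
  have hR₀int : ∀ C ∈ R₀, ∀ D ∈ R₀, C ∩ D ∈ R₀ := by
    rintro C ⟨t, ht, rfl⟩ D ⟨s, hs, rfl⟩
    refine ⟨t ∪ s, by rw [Finset.coe_union]; exact Set.union_subset ht hs, ?_⟩
    rw [Set.diff_inter_diff]
    congr 1
    simp [hU, Finset.set_biUnion_union]
  have hR₀empty : ⋂₀ R₀ = ∅ := by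
    rw [Set.eq_empty_iff_forall_notMem]
    intro y hy
    have hyB : y ∈ B := by
      have := hy B ⟨∅, by simp, by simp [hU]⟩
      exact this
    have hy2 := hy (B \ U {y}) ⟨{y}, by simpa using hyB, rfl⟩
    have : y ∈ U ({y} : Finset X) := by simp [hU]; exact (hgB y hyB).1
    exact hy2.2 this
  obtain ⟨C, ⟨t, ht, rfl⟩, hCε⟩ := hμ.continuity R₀ hR₀sub hR₀ne hR₀int hR₀empty ε hε
  obtain ⟨hmemU, hnormU⟩ := hUb t ht
  have hid : B = (B \ U t) ∪ (B ∩ U t) := (Set.diff_union_inter B (U t)).symm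
  have hdisj : Disjoint (B \ U t) (B ∩ U t) := by
    rw [Set.disjoint_left]; rintro x ⟨-, hx⟩ ⟨-, hx'⟩; exact hx hx'
  have hadd : μ B = μ (B \ U t) + μ (B ∩ U t) := by
    conv_lhs => rw [hid]
    exact hμ.additive (hR.diff_mem hB (hUmem t)) hmemU hdisj
  rw [hadd]
  refine le_trans (hna _ _) (max_le ?_ hnormU)
  linarith
end aux

theorem stmt2 {X K : Type*} [NontriviallyNormedField K] [CompleteSpace K]
    (hna : ∀ x y : K, ‖x + y‖ ≤ max ‖x‖ ‖y‖)
    (R : Set (Set X)) (hR : IsSepSetRing R)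
    (μ : Set X → K) (hμ : IsNAMeasure R μ)
    (A : Set X) (hA : A ∈ R) :
    mSetNorm R μ A = sSup (mNormFn R μ '' A) := by
  have hbdd : BddAbove (mNormFn R μ '' A) := by
    refine ⟨mSetNorm R μ A, ?_⟩
    rintro r ⟨x, hx, rfl⟩
    exact normFn_le hR hμ hA hx
  rcases Set.eq_empty_or_nonempty A with hAe | ⟨x0, hx0⟩
  · subst hAe
    rw [Set.image_empty, Real.sSup_empty]
    refine le_antisymm (Real.sSup_le ?_ le_rfl) (setNorm_nonneg hR hμ hA)
    rintro r ⟨B, hB, hBA, rfl⟩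
    rw [Set.subset_empty_iff] at hBA
    subst hBA
    rw [mu_empty hR hμ, norm_zero]
  · set T := sSup (mNormFn R μ '' A) with hT
    have hT0 : 0 ≤ T := le_trans (normFn_nonneg hR hμ x0)
      (le_csSup hbdd ⟨x0, hx0, rfl⟩)
    refine le_antisymm ?_ ?_
    · refine Real.sSup_le ?_ hT0
      rintro r ⟨B, hB, hBA, rfl⟩
      refine key_bound hna hR hμ hB hT0 ?_
      intro x hx
      exact le_csSup hbdd ⟨x, hBA hx, rfl⟩
    · refine Real.sSup_le ?_ (setNorm_nonneg hR hμ hA)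
      rintro r ⟨x, hx, rfl⟩
      exact normFn_le hR hμ hA hx
end

section
/- Let μ be a K-valued measure on 𝓡, let A ⊆ X be any subset, let ε > 0 be real and let B, B' ∈ 𝓡 be two ε-approximations of A, i.e. N_μ(x) ≤ ε for all x in the symmetric difference A Δ B and N_μ(x) ≤ ε for all x in A Δ B'. Then ‖μ(B) − μ(B')‖ ≤ ε. (In particular, the value of the extended measure on an approximable set is well defined as a limit.) -/
section AuxStmt4
variable {X K : Type*} [NontriviallyNormedField K]
variable {R : Set (Set X)} {μ : Set X → K}

lemma stmt4_mu_empty (hR : IsSepSetRing R) (hμ : IsNAMeasure R μ) : μ (∅ : Set X) = 0 := by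
  have h := hμ.additive hR.empty_mem hR.empty_mem (by simp)
  simp only [Set.union_empty] at h
  exact (add_eq_left.mp h.symm)

lemma stmt4_norm_le_setNorm (hμ : IsNAMeasure R μ) {D A : Set X}
    (hD : D ∈ R) (hA : A ∈ R) (hsub : D ⊆ A) : ‖μ D‖ ≤ mSetNorm R μ A :=
  le_csSup (hμ.bounded A hA) ⟨D, hD, hsub, rfl⟩

lemma stmt4_setNorm_nonneg (hR : IsSepSetRing R) (hμ : IsNAMeasure R μ) {A : Set X}
    (hA : A ∈ R) : 0 ≤ mSetNorm R μ A := by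
  have := stmt4_norm_le_setNorm hμ hR.empty_mem hA (Set.empty_subset A)
  rwa [stmt4_mu_empty hR hμ, norm_zero] at this

lemma stmt4_exists_set (hR : IsSepSetRing R) (hμ : IsNAMeasure R μ) {x : X} {ε δ : ℝ}
    (hx : mNormFn R μ x ≤ ε) (hδ : 0 < δ) :
    ∃ A ∈ R, x ∈ A ∧ mSetNorm R μ A < ε + δ := by
  obtain ⟨A₀, hA₀, hxA₀⟩ := hR.covering x
  have hne : {r : ℝ | ∃ A ∈ R, x ∈ A ∧ r = mSetNorm R μ A}.Nonempty :=
    ⟨mSetNorm R μ A₀, A₀, hA₀, hxA₀, rfl⟩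
  have hlt : mNormFn R μ x < ε + δ := lt_of_le_of_lt hx (by linarith)
  obtain ⟨r, ⟨A, hA, hxA, rfl⟩, hrlt⟩ := exists_lt_of_csInf_lt hne hlt
  exact ⟨A, hA, hxA, hrlt⟩

lemma stmt4_biUnion_mem (hR : IsSepSetRing R) {ι : Type*} (f : ι → Set X)
    (hf : ∀ i, f i ∈ R) (s : Finset ι) : (⋃ i ∈ s, f i) ∈ R := by
  classical
  induction s using Finset.induction_on with
  | empty => simpa using hR.empty_mem
  | @insert a t ha ih =>
      rw [Finset.set_biUnion_insert]
      exact hR.union_mem (hf _) ih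

lemma stmt4_bound_by_cover (hna : ∀ x y : K, ‖x + y‖ ≤ max ‖x‖ ‖y‖)
    (hR : IsSepSetRing R) (hμ : IsNAMeasure R μ) {ι : Type*} (f : ι → Set X)
    (hf : ∀ i, f i ∈ R) {M : ℝ} (hM : 0 ≤ M) (hfM : ∀ i, mSetNorm R μ (f i) ≤ M)
    (s : Finset ι) : ∀ E ∈ R, E ⊆ (⋃ i ∈ s, f i) → ‖μ E‖ ≤ M := by
  classical
  induction s using Finset.induction_on with
  | empty =>
      intro E hE hsub
      simp only [Finset.notMem_empty, Set.iUnion_of_empty, Set.iUnion_empty,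
        Set.subset_empty_iff] at hsub
      rw [hsub, stmt4_mu_empty hR hμ, norm_zero]; exact hM
  | @insert a t ha ih =>
      intro E hE hsub
      rw [Finset.set_biUnion_insert] at hsub
      have hE1 : E \ f a ∈ R := hR.diff_mem hE (hf a)
      have hE2 : E ∩ f a ∈ R := by
        have : E ∩ f a = E \ (E \ f a) := by ext x; simp only [Set.mem_inter_iff, Set.mem_diff, Set.mem_union, Set.mem_empty_iff_false, iff_false, not_and, not_not, not_exists]; tauto
        rw [this]; exact hR.diff_mem hE hE1
      have hdisj : Disjoint (E ∩ f a) (E \ f a) := by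
        rw [Set.disjoint_iff_inter_eq_empty]; ext x; simp only [Set.mem_inter_iff, Set.mem_diff, Set.mem_union, Set.mem_empty_iff_false, iff_false, not_and, not_not, not_exists]; tauto
      have hunion : (E ∩ f a) ∪ (E \ f a) = E := by ext x; simp only [Set.mem_inter_iff, Set.mem_diff, Set.mem_union, Set.mem_empty_iff_false, iff_false, not_and, not_not, not_exists]; tauto
      have hμE : μ E = μ (E ∩ f a) + μ (E \ f a) := by
        have h' := hμ.additive hE2 hE1 hdisj
        rwa [hunion] at h'
      have h1 : ‖μ (E ∩ f a)‖ ≤ M :=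
        le_trans (stmt4_norm_le_setNorm hμ hE2 (hf a) Set.inter_subset_right) (hfM a)
      have h2 : ‖μ (E \ f a)‖ ≤ M := by
        refine ih (E \ f a) hE1 ?_
        intro x hx
        rcases hsub hx.1 with h' | h'
        · exact absurd h' hx.2
        · exact h'
      calc ‖μ E‖ = ‖μ (E ∩ f a) + μ (E \ f a)‖ := by rw [hμE]
        _ ≤ max ‖μ (E ∩ f a)‖ ‖μ (E \ f a)‖ := hna _ _
        _ ≤ M := max_le h1 h2

lemma stmt4_key (hna : ∀ x y : K, ‖x + y‖ ≤ max ‖x‖ ‖y‖)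
    (hR : IsSepSetRing R) (hμ : IsNAMeasure R μ) {C : Set X} (hC : C ∈ R)
    {ε : ℝ} (hε : 0 ≤ ε) (hCN : ∀ x ∈ C, mNormFn R μ x ≤ ε) : ‖μ C‖ ≤ ε := by
  classical
  refine le_of_forall_pos_le_add ?_
  intro δ hδ
  have hch : ∀ x : C, ∃ A ∈ R, (x : X) ∈ A ∧ mSetNorm R μ A < ε + δ := fun x =>
    stmt4_exists_set hR hμ (hCN x x.2) hδ
  choose f hfR hfx hflt using hch
  set R₀ : Set (Set X) := {D | ∃ s : Finset C, D = C \ ⋃ i ∈ s, f i} with hR₀def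
  have hsubR : R₀ ⊆ R := by
    rintro D ⟨s, rfl⟩
    exact hR.diff_mem hC (stmt4_biUnion_mem hR f hfR s)
  have hne : R₀.Nonempty := ⟨C, ∅, by simp⟩
  have hinter : ∀ D ∈ R₀, ∀ D' ∈ R₀, D ∩ D' ∈ R₀ := by
    rintro D ⟨s, rfl⟩ D' ⟨t, rfl⟩
    refine ⟨s ∪ t, ?_⟩
    rw [Set.diff_inter_diff, Finset.set_biUnion_union]
  have hempty : ⋂₀ R₀ = ∅ := by
    rw [Set.eq_empty_iff_forall_notMem]
    intro x hx
    by_cases hxC : x ∈ C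
    · have hmem : C \ ⋃ i ∈ ({⟨x, hxC⟩} : Finset C), f i ∈ R₀ := ⟨_, rfl⟩
      have := hx _ hmem
      simp only [Finset.mem_singleton, Set.mem_diff, Set.mem_iUnion] at this
      exact this.2 ⟨⟨x, hxC⟩, rfl, hfx ⟨x, hxC⟩⟩
    · have hmem : C ∈ R₀ := ⟨∅, by simp⟩
      exact hxC (hx _ hmem)
  obtain ⟨D, hD, hDnorm⟩ := hμ.continuity R₀ hsubR hne hinter hempty δ hδ
  obtain ⟨s, rfl⟩ := hD
  set U := ⋃ i ∈ s, f i with hUdef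
  have hU : U ∈ R := stmt4_biUnion_mem hR f hfR s
  have hCU : C \ U ∈ R := hR.diff_mem hC hU
  have hCiU : C ∩ U ∈ R := by
    have : C ∩ U = C \ (C \ U) := by ext x; simp only [Set.mem_inter_iff, Set.mem_diff, Set.mem_union, Set.mem_empty_iff_false, iff_false, not_and, not_not, not_exists]; tauto
    rw [this]; exact hR.diff_mem hC hCU
  have hdisj : Disjoint (C \ U) (C ∩ U) := by
    rw [Set.disjoint_iff_inter_eq_empty]; ext x; simp only [Set.mem_inter_iff, Set.mem_diff, Set.mem_union, Set.mem_empty_iff_false, iff_false, not_and, not_not, not_exists]; tauto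
  have hunion : (C \ U) ∪ (C ∩ U) = C := by ext x; simp only [Set.mem_inter_iff, Set.mem_diff, Set.mem_union, Set.mem_empty_iff_false, iff_false, not_and, not_not, not_exists]; tauto
  have hμC : μ C = μ (C \ U) + μ (C ∩ U) := by
    have h' := hμ.additive hCU hCiU hdisj
    rwa [hunion] at h'
  have h2 : ‖μ (C ∩ U)‖ ≤ ε + δ := by
    refine stmt4_bound_by_cover hna hR hμ f hfR (by linarith) (fun i => (hflt i).le) s
      (C ∩ U) hCiU Set.inter_subset_right
  calc ‖μ C‖ = ‖μ (C \ U) + μ (C ∩ U)‖ := by rw [hμC]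
    _ ≤ max ‖μ (C \ U)‖ ‖μ (C ∩ U)‖ := hna _ _
    _ ≤ ε + δ := max_le (by linarith [hDnorm]) h2

end AuxStmt4

theorem stmt4 {X K : Type*} [NontriviallyNormedField K] [CompleteSpace K]
    (hna : ∀ x y : K, ‖x + y‖ ≤ max ‖x‖ ‖y‖)
    (R : Set (Set X)) (hR : IsSepSetRing R)
    (μ : Set X → K) (hμ : IsNAMeasure R μ)
    (A : Set X) (ε : ℝ) (hε : 0 < ε) (B B' : Set X) (hB : B ∈ R) (hB' : B' ∈ R)
    (happroxB : ∀ x ∈ (A ∪ B) \ (A ∩ B), mNormFn R μ x ≤ ε)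
    (happroxB' : ∀ x ∈ (A ∪ B') \ (A ∩ B'), mNormFn R μ x ≤ ε) :
    ‖μ B - μ B'‖ ≤ ε := by
  have hC1 : B \ B' ∈ R := hR.diff_mem hB hB'
  have hC2 : B' \ B ∈ R := hR.diff_mem hB' hB
  have hInt : B ∩ B' ∈ R := by
    have : B ∩ B' = B \ (B \ B') := by ext x; simp only [Set.mem_inter_iff, Set.mem_diff, Set.mem_union, Set.mem_empty_iff_false, iff_false, not_and, not_not, not_exists]; tauto
    rw [this]; exact hR.diff_mem hB hC1
  have hμB : μ B = μ (B \ B') + μ (B ∩ B') := by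
    have hdisj : Disjoint (B \ B') (B ∩ B') := by
      rw [Set.disjoint_iff_inter_eq_empty]; ext x; simp only [Set.mem_inter_iff, Set.mem_diff, Set.mem_union, Set.mem_empty_iff_false, iff_false, not_and, not_not, not_exists]; tauto
    have hunion : (B \ B') ∪ (B ∩ B') = B := by ext x; simp only [Set.mem_inter_iff, Set.mem_diff, Set.mem_union, Set.mem_empty_iff_false, iff_false, not_and, not_not, not_exists]; tauto
    have h' := hμ.additive hC1 hInt hdisj
    rwa [hunion] at h'
  have hμB' : μ B' = μ (B' \ B) + μ (B ∩ B') := by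
    have hdisj : Disjoint (B' \ B) (B ∩ B') := by
      rw [Set.disjoint_iff_inter_eq_empty]; ext x; simp only [Set.mem_inter_iff, Set.mem_diff, Set.mem_union, Set.mem_empty_iff_false, iff_false, not_and, not_not, not_exists]; tauto
    have hunion : (B' \ B) ∪ (B ∩ B') = B' := by ext x; simp only [Set.mem_inter_iff, Set.mem_diff, Set.mem_union, Set.mem_empty_iff_false, iff_false, not_and, not_not, not_exists]; tauto
    have h' := hμ.additive hC2 hInt hdisj
    rwa [hunion] at h'
  have hN1 : ∀ x ∈ B \ B', mNormFn R μ x ≤ ε := by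
    intro x hx
    by_cases hxA : x ∈ A
    · exact happroxB' x ⟨Or.inl hxA, fun h => hx.2 h.2⟩
    · exact happroxB x ⟨Or.inr hx.1, fun h => hxA h.1⟩
  have hN2 : ∀ x ∈ B' \ B, mNormFn R μ x ≤ ε := by
    intro x hx
    by_cases hxA : x ∈ A
    · exact happroxB x ⟨Or.inl hxA, fun h => hx.2 h.2⟩
    · exact happroxB' x ⟨Or.inr hx.1, fun h => hxA h.1⟩
  have h1 : ‖μ (B \ B')‖ ≤ ε := stmt4_key hna hR hμ hC1 hε.le hN1
  have h2 : ‖μ (B' \ B)‖ ≤ ε := stmt4_key hna hR hμ hC2 hε.le hN2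
  have heq : μ B - μ B' = μ (B \ B') + (-(μ (B' \ B))) := by
    rw [hμB, hμB']; ring
  rw [heq]
  calc ‖μ (B \ B') + (-(μ (B' \ B)))‖ ≤ max ‖μ (B \ B')‖ ‖-(μ (B' \ B))‖ := hna _ _
    _ ≤ ε := by rw [norm_neg]; exact max_le h1 h2
end

section
/- Let μ be a K-valued measure on 𝓡. Then the extended collection 𝓡_μ is again a ring of sets containing 𝓡: one has 𝓡 ⊆ 𝓡_μ, and for all A, B ∈ 𝓡_μ both A ∪ B ∈ 𝓡_μ and A \ B ∈ 𝓡_μ. -/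
theorem stmt5 {X K : Type*} [NontriviallyNormedField K] [CompleteSpace K]
    (hna : ∀ x y : K, ‖x + y‖ ≤ max ‖x‖ ‖y‖)
    (R : Set (Set X)) (hR : IsSepSetRing R)
    (μ : Set X → K) (hμ : IsNAMeasure R μ) :
    R ⊆ extRing R μ ∧
      (∀ A ∈ extRing R μ, ∀ B ∈ extRing R μ, A ∪ B ∈ extRing R μ) ∧
      (∀ A ∈ extRing R μ, ∀ B ∈ extRing R μ, A \ B ∈ extRing R μ) := by
  refine ⟨?_, ?_, ?_⟩
  · intro A hA ε hε
    exact ⟨A, hA, by simp⟩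
  · intro A hA B hB ε hε
    obtain ⟨A', hA', h1⟩ := hA ε hε
    obtain ⟨B', hB', h2⟩ := hB ε hε
    refine ⟨A' ∪ B', hR.union_mem hA' hB', fun x hx => ?_⟩
    simp only [Set.mem_diff, Set.mem_union, Set.mem_inter_iff, not_and_or] at hx h1 h2
    specialize h1 x; specialize h2 x
    rcases hx with ⟨h3, h4 | h4⟩
    · by_cases hxA : x ∈ A <;> by_cases hxA' : x ∈ A' <;> tauto
    · by_cases hxB : x ∈ B <;> by_cases hxB' : x ∈ B' <;> tauto
  · intro A hA B hB ε hε
    obtain ⟨A', hA', h1⟩ := hA ε hε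
    obtain ⟨B', hB', h2⟩ := hB ε hε
    refine ⟨A' \ B', hR.diff_mem hA' hB', fun x hx => ?_⟩
    simp only [Set.mem_diff, Set.mem_union, Set.mem_inter_iff, not_and_or] at hx h1 h2
    specialize h1 x; specialize h2 x
    tauto
end

section
/- Let μ be a K-valued measure on 𝓡. Then the function N_μ : X → ℝ is upper semicontinuous with respect to the 𝓡_μ-topology on X. -/
theorem stmt7 {X K : Type*} [NontriviallyNormedField K] [CompleteSpace K]
    (hna : ∀ x y : K, ‖x + y‖ ≤ max ‖x‖ ‖y‖)
    (R : Set (Set X)) (hR : IsSepSetRing R)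
    (μ : Set X → K) (hμ : IsNAMeasure R μ) :
    @UpperSemicontinuous X ℝ (TopologicalSpace.generateFrom (extRing R μ)) _
      (mNormFn R μ) := by
  letI : TopologicalSpace X := TopologicalSpace.generateFrom (extRing R μ)
  have hμ0 : μ ∅ = 0 := by
    have h := hμ.additive hR.empty_mem hR.empty_mem (by simp)
    simp only [Set.union_self] at h
    exact (left_eq_add.mp h)
  have hnn : ∀ A ∈ R, 0 ≤ mSetNorm R μ A := fun A hA =>
    le_csSup (hμ.bounded A hA) ⟨∅, hR.empty_mem, Set.empty_subset A, by
      rw [hμ0, norm_zero]⟩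
  have hlb : ∀ y : X, ∀ r ∈ {r : ℝ | ∃ A ∈ R, y ∈ A ∧ r = mSetNorm R μ A}, (0:ℝ) ≤ r := by
    rintro y r ⟨A, hA, -, rfl⟩
    exact hnn A hA
  have hsub : R ⊆ extRing R μ := fun A hA ε hε =>
    ⟨A, hA, fun y hy => by simp at hy⟩
  intro x c hc
  have hne : {r : ℝ | ∃ A ∈ R, x ∈ A ∧ r = mSetNorm R μ A}.Nonempty := by
    obtain ⟨A, hA, hxA⟩ := hR.covering x
    exact ⟨mSetNorm R μ A, A, hA, hxA, rfl⟩
  obtain ⟨r, ⟨A, hA, hxA, rfl⟩, hr⟩ := exists_lt_of_csInf_lt hne hc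
  have hopen : IsOpen A := TopologicalSpace.GenerateOpen.basic A (hsub hA)
  filter_upwards [hopen.mem_nhds hxA] with y hy
  calc mNormFn R μ y ≤ mSetNorm R μ A :=
        csInf_le ⟨0, hlb y⟩ ⟨A, hA, hy, rfl⟩
    _ < c := hr
end

section
/- Countable saturation of the ultrapower over the hyperfilter (Proposition on shrinking families of internal sets): Let X be a set and let B : ℕ → ℕ → Set X be a countable family, where B n (as a sequence of sets modulo U) represents the n-th internal subset of the ultrapower of X. Suppose the family is shrinking in the internal sense: for all m, n ∈ ℕ there exists k ∈ ℕ with {i : B k i ⊆ B m i ∩ B n i} ∈ U; and suppose every member is internally nonempty: for every n, {i : B n i ≠ ∅} ∈ U. Then the internal intersection is nonempty: there exists x : ℕ → X such that for every n ∈ ℕ, {i : x i ∈ B n i} ∈ U. -/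
open Classical in
/-- Countable saturation for the ultrapower over the hyperfilter: a countable
internally-shrinking family of internally nonempty internal sets has a common
element in the ultrapower. -/
theorem stmt12 {X : Type*} (B : ℕ → ℕ → Set X)
    (hshrink : ∀ m n : ℕ, ∃ k : ℕ,
      {i : ℕ | B k i ⊆ B m i ∩ B n i} ∈ Filter.hyperfilter ℕ)
    (hne : ∀ n : ℕ, {i : ℕ | B n i ≠ ∅} ∈ Filter.hyperfilter ℕ) :
    ∃ x : ℕ → X, ∀ n : ℕ, {i : ℕ | x i ∈ B n i} ∈ Filter.hyperfilter ℕ := by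
  classical
  -- X is nonempty
  have hXne : Nonempty X := by
    have h0 := hne 0
    have : {i : ℕ | B 0 i ≠ ∅}.Nonempty :=
      Filter.nonempty_of_mem h0
    obtain ⟨i, hi⟩ := this
    obtain ⟨x, hx⟩ := Set.nonempty_iff_ne_empty.2 hi
    exact ⟨x⟩
  -- build the chain of indices
  let k : ℕ → ℕ := fun n => Nat.rec 0 (fun n kn => (hshrink kn n).choose) n
  have hk : ∀ n : ℕ, {i : ℕ | B (k (n+1)) i ⊆ B (k n) i ∩ B n i} ∈ Filter.hyperfilter ℕ :=
    fun n => (hshrink (k n) n).choose_spec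
  -- the good sets
  let P : ℕ → ℕ → Prop := fun n i =>
    B (k n) i ≠ ∅ ∧ ∀ m < n, B (k (m+1)) i ⊆ B (k m) i ∩ B m i
  have hF : ∀ n, {i : ℕ | P n i} ∈ Filter.hyperfilter ℕ := by
    intro n
    have h1 := hne (k n)
    have h2 : {i : ℕ | ∀ m < n, B (k (m+1)) i ⊆ B (k m) i ∩ B m i} ∈ Filter.hyperfilter ℕ := by
      have : (⋂ m ∈ Finset.range n, {i : ℕ | B (k (m+1)) i ⊆ B (k m) i ∩ B m i})
          ∈ Filter.hyperfilter ℕ := by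
        refine (Filter.biInter_finset_mem _).2 ?_
        intro m _
        exact hk m
      refine Filter.mem_of_superset this ?_
      intro i hi m hm
      simp only [Set.mem_iInter] at hi
      exact hi m (Finset.mem_range.2 hm)
    exact Filter.inter_mem h1 h2
  -- chain containment
  have hchain : ∀ n i, P n i → ∀ j ≤ n, B (k n) i ⊆ B (k j) i := by
    intro n
    induction n with
    | zero => intro i _ j hj; interval_cases j; exact le_rfl
    | succ n ih =>
      intro i hi j hj
      rcases Nat.eq_or_lt_of_le hj with h | h
      · subst h; exact le_rfl
      · have h1 : B (k (n+1)) i ⊆ B (k n) i := fun x hx =>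
          (hi.2 n (Nat.lt_succ_self n) hx).1
        have hne' : B (k n) i ≠ ∅ := by
          obtain ⟨y, hy⟩ := Set.nonempty_iff_ne_empty.2 hi.1
          exact Set.nonempty_iff_ne_empty.1 ⟨y, h1 hy⟩
        have hPn : P n i := ⟨hne', fun m hm => hi.2 m (Nat.lt_succ_of_lt hm)⟩
        exact h1.trans (ih i hPn j (Nat.lt_succ_iff.1 h))
  -- define the diagonal element
  let d : ℕ → ℕ := fun i => Nat.findGreatest (fun n => P n i) i
  let x : ℕ → X := fun i =>
    if h : (B (k (d i)) i).Nonempty then h.choose else Classical.arbitrary X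
  refine ⟨x, fun n => ?_⟩
  have hcof : {i : ℕ | n + 1 ≤ i} ∈ Filter.hyperfilter ℕ := by
    refine Filter.hyperfilter_le_cofinite ?_
    simp [Filter.mem_cofinite]
    exact (Set.finite_Iio (n+1)).subset (by intro i hi; simpa using Nat.lt_of_not_le hi)
  have hmem := Filter.inter_mem hcof (hF (n+1))
  refine Filter.mem_of_superset hmem ?_
  rintro i ⟨hi1, hi2⟩
  have hd1 : n + 1 ≤ d i := Nat.le_findGreatest hi1 hi2
  have hdP : P (d i) i := Nat.findGreatest_spec (P := fun n => P n i) hi1 hi2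
  have hNE : (B (k (d i)) i).Nonempty := Set.nonempty_iff_ne_empty.2 hdP.1
  have hx : x i ∈ B (k (d i)) i := by
    simp only [x, dif_pos hNE]
    exact hNE.choose_spec
  have hsub : B (k (d i)) i ⊆ B (k (n+1)) i := hchain (d i) i hdP (n+1) hd1
  have hsub2 : B (k (n+1)) i ⊆ B n i := fun y hy => (hdP.2 n hd1 hy).2
  exact hsub2 (hsub hx)
end

section
/- Volkenborn-type limit for power functions (p-adic integral of xⁿ): let p be a prime and n ∈ ℕ. Then in the field ℚ_p of p-adic numbers, the sequence N ↦ (1/pᴺ) · Σ_{m=0}^{pᴺ−1} mⁿ converges as N → ∞ to the n-th Bernoulli number Bₙ (cast from ℚ into ℚ_p), where the Bernoulli numbers are taken with the convention B₁ = −1/2. -/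
/-- Volkenborn-type limit: `(1/pᴺ) Σ_{m<pᴺ} mⁿ → Bₙ` in `ℚ_p`. -/
theorem stmt17 (p : ℕ) [Fact p.Prime] (n : ℕ) :
    Filter.Tendsto
      (fun N : ℕ =>
        ((p : ℚ_[p]) ^ N)⁻¹ * ∑ m ∈ Finset.range (p ^ N), (m : ℚ_[p]) ^ n)
      Filter.atTop (nhds ((bernoulli n : ℚ) : ℚ_[p])) := by
  have hp : (p : ℚ_[p]) ≠ 0 :=
    Nat.cast_ne_zero.mpr (Fact.out (p := p.Prime)).ne_zero
  have key : ∀ N : ℕ, ((p : ℚ_[p]) ^ N)⁻¹ * ∑ m ∈ Finset.range (p ^ N), (m : ℚ_[p]) ^ n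
      = ((bernoulli n : ℚ) : ℚ_[p]) + ∑ i ∈ Finset.range n,
          ((bernoulli i * ((n + 1).choose i) / (n + 1) : ℚ) : ℚ_[p]) * ((p : ℚ_[p]) ^ N) ^ (n - i) := by
    intro N
    have hpow : (p : ℚ_[p]) ^ N ≠ 0 := pow_ne_zero _ hp
    have h := sum_range_pow (p ^ N) n
    have h2 : (∑ m ∈ Finset.range (p ^ N), (m : ℚ_[p]) ^ n)
        = ∑ i ∈ Finset.range (n + 1),
            ((bernoulli i * ((n + 1).choose i) / (n + 1) : ℚ) : ℚ_[p]) * ((p : ℚ_[p]) ^ N) ^ (n + 1 - i) := by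
      have := congrArg (fun q : ℚ => (q : ℚ_[p])) h
      push_cast at this ⊢
      simpa [mul_div_assoc, mul_comm, mul_assoc, mul_left_comm] using this
    rw [h2, Finset.sum_range_succ, mul_add, Finset.mul_sum]
    have hc : (bernoulli n * ((n + 1).choose n) / (n + 1) : ℚ) = bernoulli n := by
      rw [Nat.choose_succ_self_right]
      have : ((n : ℚ) + 1) ≠ 0 := by positivity
      push_cast
      field_simp
    have hlast : ((p : ℚ_[p]) ^ N)⁻¹ *
        (((bernoulli n * ((n + 1).choose n) / (n + 1) : ℚ) : ℚ_[p]) * ((p : ℚ_[p]) ^ N) ^ (n + 1 - n))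
        = ((bernoulli n : ℚ) : ℚ_[p]) := by
      rw [hc]
      have h1 : n + 1 - n = 1 := by omega
      rw [h1, pow_one, mul_comm ((bernoulli n : ℚ) : ℚ_[p]), ← mul_assoc,
        inv_mul_cancel₀ hpow, one_mul]
    rw [hlast, add_comm]
    congr 1
    refine Finset.sum_congr rfl fun i hi => ?_
    have hi' : i < n := Finset.mem_range.mp hi
    have : n + 1 - i = (n - i) + 1 := by omega
    rw [this]
    set c : ℚ_[p] := ((bernoulli i * ((n + 1).choose i) / (n + 1) : ℚ) : ℚ_[p])
    calc ((p : ℚ_[p]) ^ N)⁻¹ * (c * ((p : ℚ_[p]) ^ N) ^ (n - i + 1))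
        = (((p : ℚ_[p]) ^ N)⁻¹ * ((p : ℚ_[p]) ^ N)) * (c * ((p : ℚ_[p]) ^ N) ^ (n - i)) := by
          ring
      _ = c * ((p : ℚ_[p]) ^ N) ^ (n - i) := by rw [inv_mul_cancel₀ hpow, one_mul]
  simp only [key]
  have h0 : Filter.Tendsto (fun N : ℕ => (p : ℚ_[p]) ^ N) Filter.atTop (nhds 0) :=
    tendsto_pow_atTop_nhds_zero_of_norm_lt_one Padic.norm_p_lt_one
  have hsum : Filter.Tendsto (fun N : ℕ => ∑ i ∈ Finset.range n,
      ((bernoulli i * ((n + 1).choose i) / (n + 1) : ℚ) : ℚ_[p]) * ((p : ℚ_[p]) ^ N) ^ (n - i))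
      Filter.atTop (nhds 0) := by
    have : (0 : ℚ_[p]) = ∑ i ∈ Finset.range n, (0 : ℚ_[p]) := by simp
    rw [this]
    refine tendsto_finset_sum _ fun i hi => ?_
    have hi' : i < n := Finset.mem_range.mp hi
    have hk : n - i ≠ 0 := by omega
    have : Filter.Tendsto (fun N : ℕ => ((p : ℚ_[p]) ^ N) ^ (n - i)) Filter.atTop (nhds 0) := by
      have := h0.pow (n - i)
      simpa [zero_pow hk] using this
    simpa using this.const_mul _
  simpa using (tendsto_const_nhds.add hsum)
end

section
/- Volkenborn-type limit over units (p-adic integral of xⁿ over ℤ_p^×): let p be a prime and n ∈ ℕ. Then in ℚ_p the sequence N ↦ (1/pᴺ) · Σ_{0 ≤ m < pᴺ, p ∤ m} mⁿ converges as N → ∞ to (1 − p^{n−1}) · Bₙ, where Bₙ is the n-th Bernoulli number (convention B₁ = −1/2) cast into ℚ_p and p^{n−1} is interpreted as the integer power (p : ℚ_p)^{(n : ℤ) − 1} (so that for n = 0 the factor is 1 − 1/p). -/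
open Filter Finset

theorem aux18 (p : ℕ) [Fact p.Prime] (n : ℕ) :
    Tendsto (fun N : ℕ => ((p : ℚ_[p]) ^ N)⁻¹ * ∑ m ∈ Finset.range (p ^ N), (m : ℚ_[p]) ^ n)
      atTop (nhds ((bernoulli n : ℚ) : ℚ_[p])) := by
  have hp0 : p ≠ 0 := (Fact.out (p := p.Prime)).ne_zero
  have hp : (p : ℚ_[p]) ≠ 0 := Nat.cast_ne_zero.mpr hp0
  set c : ℕ → ℚ_[p] := fun i => ((bernoulli i * ((n+1).choose i) / (n+1) : ℚ) : ℚ_[p]) with hc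
  have key : ∀ N : ℕ, ((p : ℚ_[p]) ^ N)⁻¹ * ∑ m ∈ Finset.range (p ^ N), (m : ℚ_[p]) ^ n
      = ∑ i ∈ Finset.range (n+1), c i * ((p : ℚ_[p]) ^ (n - i)) ^ N := by
    intro N
    have h1 : (∑ m ∈ Finset.range (p ^ N), (m : ℚ_[p]) ^ n)
        = ((∑ m ∈ Finset.range (p ^ N), (m : ℚ) ^ n : ℚ) : ℚ_[p]) := by push_cast; ring
    rw [h1, sum_range_pow]
    push_cast
    rw [Finset.mul_sum]
    refine Finset.sum_congr rfl fun i hi => ?_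
    have hi' : i ≤ n := by simpa using Nat.lt_succ_iff.mp (Finset.mem_range.mp hi)
    have h2 : n + 1 - i = (n - i) + 1 := by omega
    have h3 : ((p : ℚ_[p]) ^ N) ^ (n + 1 - i) = ((p : ℚ_[p]) ^ (n - i)) ^ N * (p : ℚ_[p]) ^ N := by
      rw [h2, pow_succ, ← pow_mul, ← pow_mul, Nat.mul_comm]
    rw [h3]
    have hn1 : ((n : ℚ_[p]) + 1) ≠ 0 := by
      have := Nat.cast_add_one_ne_zero (R := ℚ_[p]) n
      simpa using this
    simp only [hc]
    push_cast
    field_simp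
  simp only [key]
  have hsum : ∀ N : ℕ, ∑ i ∈ Finset.range (n+1), c i * ((p : ℚ_[p]) ^ (n - i)) ^ N
      = (∑ i ∈ Finset.range n, c i * ((p : ℚ_[p]) ^ (n - i)) ^ N) + c n := by
    intro N
    rw [Finset.sum_range_succ]
    simp
  simp only [hsum]
  have hcn : c n = ((bernoulli n : ℚ) : ℚ_[p]) := by
    simp only [hc, Nat.choose_succ_self_right]
    have h2 : ((n : ℚ_[p]) + 1) ≠ 0 := Nat.cast_add_one_ne_zero n
    push_cast
    rw [mul_div_assoc, div_self h2, mul_one]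
  have hzero : Tendsto (fun N : ℕ => ∑ i ∈ Finset.range n, c i * ((p : ℚ_[p]) ^ (n - i)) ^ N)
      atTop (nhds 0) := by
    have : Tendsto (fun N : ℕ => ∑ i ∈ Finset.range n, c i * ((p : ℚ_[p]) ^ (n - i)) ^ N)
        atTop (nhds (∑ i ∈ Finset.range n, (0 : ℚ_[p]))) := by
      refine tendsto_finset_sum _ fun i hi => ?_
      have hi' : i < n := Finset.mem_range.mp hi
      have hnorm : ‖(p : ℚ_[p]) ^ (n - i)‖ < 1 := by
        rw [norm_pow, Padic.norm_p]
        refine pow_lt_one₀ (by positivity) ?_ (by omega)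
        rw [inv_lt_one_iff₀]
        right
        exact_mod_cast (Fact.out (p := p.Prime)).one_lt
      have := tendsto_pow_atTop_nhds_zero_of_norm_lt_one hnorm
      simpa using this.const_mul (c i)
    simpa using this
  simp only [hcn]
  simpa using hzero.add_const (((bernoulli n : ℚ) : ℚ_[p]))

/-- Volkenborn-type limit over units: `(1/pᴺ) Σ_{m<pᴺ, p∤m} mⁿ → (1 − p^{n−1})·Bₙ`
in `ℚ_p`. -/
theorem stmt18 (p : ℕ) [Fact p.Prime] (n : ℕ) :
    Filter.Tendsto
      (fun N : ℕ =>
        ((p : ℚ_[p]) ^ N)⁻¹ *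
          ∑ m ∈ (Finset.range (p ^ N)).filter (fun m => ¬ p ∣ m), (m : ℚ_[p]) ^ n)
      Filter.atTop
      (nhds ((1 - (p : ℚ_[p]) ^ ((n : ℤ) - 1)) * ((bernoulli n : ℚ) : ℚ_[p]))) := by
  have hp0 : p ≠ 0 := (Fact.out (p := p.Prime)).ne_zero
  have hp : (p : ℚ_[p]) ≠ 0 := Nat.cast_ne_zero.mpr hp0
  set F : ℕ → ℚ_[p] := fun N => ((p : ℚ_[p]) ^ N)⁻¹ * ∑ m ∈ Finset.range (p ^ N), (m : ℚ_[p]) ^ n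
    with hF
  have hzp : (p : ℚ_[p]) ^ ((n : ℤ) - 1) = (p : ℚ_[p]) ^ n * ((p : ℚ_[p]))⁻¹ := by
    rw [zpow_sub₀ hp, zpow_natCast, zpow_one, div_eq_mul_inv]
  -- eventual equality
  have heq : ∀ N : ℕ, 1 ≤ N →
      ((p : ℚ_[p]) ^ N)⁻¹ *
          ∑ m ∈ (Finset.range (p ^ N)).filter (fun m => ¬ p ∣ m), (m : ℚ_[p]) ^ n
        = F N - (p : ℚ_[p]) ^ ((n : ℤ) - 1) * F (N - 1) := by
    intro N hN
    have hsplit : (∑ m ∈ (Finset.range (p ^ N)).filter (fun m => p ∣ m), (m : ℚ_[p]) ^ n)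
        + ∑ m ∈ (Finset.range (p ^ N)).filter (fun m => ¬ p ∣ m), (m : ℚ_[p]) ^ n
        = ∑ m ∈ Finset.range (p ^ N), (m : ℚ_[p]) ^ n :=
      Finset.sum_filter_add_sum_filter_not _ _ _
    have hpowN : p ^ N = p * p ^ (N - 1) := by
      conv_lhs => rw [← Nat.sub_add_cancel hN]
      rw [pow_succ, Nat.mul_comm]
    have himg : (Finset.range (p ^ N)).filter (fun m => p ∣ m)
        = (Finset.range (p ^ (N - 1))).image (fun k => p * k) := by
      ext m
      simp only [Finset.mem_filter, Finset.mem_range, Finset.mem_image]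
      constructor
      · rintro ⟨hm, k, rfl⟩
        refine ⟨k, ?_, rfl⟩
        rw [hpowN] at hm
        exact lt_of_mul_lt_mul_left hm (Nat.zero_le p)
      · rintro ⟨k, hk, rfl⟩
        refine ⟨?_, Dvd.intro k rfl⟩
        rw [hpowN]
        exact (Nat.mul_lt_mul_left (Nat.pos_of_ne_zero hp0)).mpr hk
    have hdivsum : (∑ m ∈ (Finset.range (p ^ N)).filter (fun m => p ∣ m), (m : ℚ_[p]) ^ n)
        = (p : ℚ_[p]) ^ n * ∑ k ∈ Finset.range (p ^ (N - 1)), (k : ℚ_[p]) ^ n := by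
      rw [himg, Finset.sum_image (fun a _ b _ h => Nat.eq_of_mul_eq_mul_left
        (Nat.pos_of_ne_zero hp0) h), Finset.mul_sum]
      refine Finset.sum_congr rfl fun k _ => ?_
      push_cast
      rw [mul_pow]
    have hPN : ((p : ℚ_[p]) ^ N)⁻¹ = (p : ℚ_[p])⁻¹ * ((p : ℚ_[p]) ^ (N - 1))⁻¹ := by
      rw [← mul_inv]
      congr 1
      conv_lhs => rw [← Nat.sub_add_cancel hN]
      rw [pow_succ']
    rw [hF]
    simp only []
    rw [eq_sub_of_add_eq' hsplit, hdivsum, hzp, hPN]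
    ring
  have h1 : Tendsto F atTop (nhds ((bernoulli n : ℚ) : ℚ_[p])) := aux18 p n
  have h2 : Tendsto (fun N : ℕ => F (N - 1)) atTop (nhds ((bernoulli n : ℚ) : ℚ_[p])) :=
    h1.comp (tendsto_sub_atTop_nat 1)
  have h3 := h1.sub (h2.const_mul ((p : ℚ_[p]) ^ ((n : ℤ) - 1)))
  have h4 : Tendsto (fun N : ℕ => F N - (p : ℚ_[p]) ^ ((n : ℤ) - 1) * F (N - 1)) atTop
      (nhds ((1 - (p : ℚ_[p]) ^ ((n : ℤ) - 1)) * ((bernoulli n : ℚ) : ℚ_[p]))) := by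
    convert h3 using 2
    ring
  refine h4.congr' ?_
  filter_upwards [eventually_ge_atTop 1] with N hN
  exact (heq N hN).symm
end

section
/- Existence of the q-adic Haar integral on ℤ_p as a limit of Riemann sums: let p and q be distinct primes and let f : ℤ_p → ℚ_q be continuous (ℤ_p with its p-adic topology, ℚ_q with its q-adic topology). Then the sequence of Riemann sums n ↦ (1/pⁿ) · Σ_{m=0}^{pⁿ−1} f(m) converges in ℚ_q to some limit L as n → ∞, where 1/pⁿ denotes the inverse of (p : ℚ_q)ⁿ (which has q-adic norm 1) and m is taken as the element (m : ℤ_p). -/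
private lemma sum_range_mul_aux {M : Type*} [AddCommMonoid M] (g : ℕ → M) (a : ℕ) :
    ∀ b : ℕ, ∑ m ∈ Finset.range (a * b), g m
      = ∑ i ∈ Finset.range b, ∑ j ∈ Finset.range a, g (a * i + j) := by
  intro b
  induction b with
  | zero => simp
  | succ b ih =>
    rw [Nat.mul_succ, Finset.sum_range_add, ih, Finset.sum_range_succ]

/-- Existence of the `q`-adic Haar integral on `ℤ_p` as a limit of Riemann sums:
for distinct primes `p ≠ q` and continuous `f : ℤ_p → ℚ_q`, the Riemann sums
`(1/pⁿ) Σ_{m<pⁿ} f(m)` converge in `ℚ_q`. -/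
theorem stmt19 (p q : ℕ) [Fact p.Prime] [Fact q.Prime] (hpq : p ≠ q)
    (f : ℤ_[p] → ℚ_[q]) (hf : Continuous f) :
    ∃ L : ℚ_[q], Filter.Tendsto
      (fun n : ℕ =>
        ((p : ℚ_[q]) ^ n)⁻¹ * ∑ m ∈ Finset.range (p ^ n), f (m : ℤ_[p]))
      Filter.atTop (nhds L) := by
  have hp : p.Prime := Fact.out
  have hq : q.Prime := Fact.out
  set a : ℕ → ℚ_[q] := fun n =>
    ((p : ℚ_[q]) ^ n)⁻¹ * ∑ m ∈ Finset.range (p ^ n), f (m : ℤ_[p]) with ha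
  -- the norm of p in ℚ_q is 1
  have hp1 : ‖(p : ℚ_[q])‖ = 1 := by
    refine le_antisymm ?_ ?_
    · exact_mod_cast Padic.norm_int_le_one (p : ℤ)
    · by_contra h
      push_neg at h
      have hd : (q : ℤ) ∣ (p : ℤ) := by
        have := (Padic.norm_intCast_lt_one_iff (k := (p : ℤ))).mp (by exact_mod_cast h)
        exact this
      have : q ∣ p := by exact_mod_cast hd
      exact hpq ((Nat.prime_dvd_prime_iff_eq hq hp).mp this).symm
  have hpne : (p : ℚ_[q]) ≠ 0 := by
    intro h; rw [h] at hp1; simp at hp1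
  have hnormpow : ∀ k : ℕ, ‖((p : ℚ_[q]) ^ k)⁻¹‖ = 1 := by
    intro k; rw [norm_inv, norm_pow, hp1, one_pow, inv_one]
  -- uniform continuity
  have huc : UniformContinuous f := CompactSpace.uniformContinuous_of_continuous hf
  rw [Metric.uniformContinuous_iff] at huc
  -- key : consecutive differences bound
  have key : ∀ ε : ℝ, 0 < ε → ∃ N : ℕ, ∀ k ≥ N, ‖a (k + 1) - a k‖ ≤ ε := by
    intro ε hε
    obtain ⟨δ, hδ, hδ'⟩ := huc ε hε
    have hplt : (p : ℝ)⁻¹ < 1 := by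
      rw [inv_lt_one_iff₀]
      right; exact_mod_cast hp.one_lt
    have hpnn : (0 : ℝ) ≤ (p : ℝ)⁻¹ := by positivity
    obtain ⟨N, hN⟩ := exists_pow_lt_of_lt_one hδ hplt
    refine ⟨N, fun k hk => ?_⟩
    have hdk : ((p : ℝ)⁻¹) ^ k < δ :=
      lt_of_le_of_lt (pow_le_pow_of_le_one hpnn hplt.le hk) hN
    -- rewrite the difference
    have hsum : ∑ m ∈ Finset.range (p ^ (k + 1)), f (m : ℤ_[p])
        = ∑ i ∈ Finset.range p, ∑ j ∈ Finset.range (p ^ k),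
            f ((p ^ k * i + j : ℕ) : ℤ_[p]) := by
      rw [pow_succ, sum_range_mul_aux]
    have hconst : (p : ℚ_[q]) * ∑ r ∈ Finset.range (p ^ k), f (r : ℤ_[p])
        = ∑ i ∈ Finset.range p, ∑ j ∈ Finset.range (p ^ k), f ((j : ℕ) : ℤ_[p]) := by
      rw [Finset.sum_const, Finset.card_range, nsmul_eq_mul]
    have hak : a k = ((p : ℚ_[q]) ^ (k + 1))⁻¹ *
        ((p : ℚ_[q]) * ∑ r ∈ Finset.range (p ^ k), f (r : ℤ_[p])) := by
      rw [ha]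
      field_simp
      ring
    have hdiff : a (k + 1) - a k = ((p : ℚ_[q]) ^ (k + 1))⁻¹ *
        ∑ i ∈ Finset.range p, ∑ j ∈ Finset.range (p ^ k),
          (f ((p ^ k * i + j : ℕ) : ℤ_[p]) - f ((j : ℕ) : ℤ_[p])) := by
      rw [hak, ha]
      simp only [← mul_sub]
      congr 1
      rw [hsum, hconst, ← Finset.sum_sub_distrib]
      refine Finset.sum_congr rfl fun i _ => ?_
      rw [← Finset.sum_sub_distrib]
    rw [hdiff, norm_mul, hnormpow, one_mul]
    refine IsUltrametricDist.norm_sum_le_of_forall_le_of_nonneg hε.le fun i _ => ?_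
    refine IsUltrametricDist.norm_sum_le_of_forall_le_of_nonneg hε.le fun j hj => ?_
    have hdist : dist (((p ^ k * i + j : ℕ) : ℤ_[p])) ((j : ℕ) : ℤ_[p]) < δ := by
      rw [dist_eq_norm]
      have hcast : (((p ^ k * i + j : ℕ) : ℤ_[p])) - ((j : ℕ) : ℤ_[p])
          = (p : ℤ_[p]) ^ k * (i : ℤ_[p]) := by push_cast; ring
      rw [hcast]
      calc ‖(p : ℤ_[p]) ^ k * (i : ℤ_[p])‖ ≤ ‖(p : ℤ_[p]) ^ k‖ := by
            rw [norm_mul]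
            exact mul_le_of_le_one_right (norm_nonneg _) (PadicInt.norm_le_one _)
        _ = ((p : ℝ)⁻¹) ^ k := by
            rw [PadicInt.norm_p_pow, zpow_neg, zpow_natCast, inv_pow]
        _ < δ := hdk
    have := hδ' hdist
    rw [dist_eq_norm] at this
    exact this.le
  -- Cauchy sequence
  have hcauchy : CauchySeq a := by
    rw [Metric.cauchySeq_iff']
    intro ε hε
    obtain ⟨N, hN⟩ := key (ε / 2) (by positivity)
    refine ⟨N, fun n hn => ?_⟩
    rw [dist_eq_norm]
    have htel : a n - a N = ∑ i ∈ Finset.range (n - N),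
        (a (N + i + 1) - a (N + i)) := by
      have h := Finset.sum_range_sub (fun i => a (N + i)) (n - N)
      simp only [Nat.add_zero, ← Nat.add_assoc] at h
      rw [Nat.add_sub_cancel' hn] at h
      exact h.symm
    rw [htel]
    have hle : ‖∑ i ∈ Finset.range (n - N), (a (N + i + 1) - a (N + i))‖ ≤ ε / 2 := by
      refine IsUltrametricDist.norm_sum_le_of_forall_le_of_nonneg (by positivity)
        fun i _ => hN (N + i) (Nat.le_add_right _ _)
    linarith
  obtain ⟨L, hL⟩ := cauchySeq_tendsto_of_complete hcauchy
  exact ⟨L, hL⟩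
end
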